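/- For every natural number n ≥ 5 and every natural number N, the root s 0 does not lie in the N-fold iterate Rad^[N] F: for the general monic polynomial of degree n ≥ 5, no fixed number N of nested levels of radicals over the field of coefficients suffices to express a root. -/

import Mathlib

open MvPolynomial

/-- `E n` is the field of rational functions in `n` variables over `ℚ`. -/
noncomputable abbrev E (n : ℕ) : Type :=
  FractionRing (MvPolynomial (Fin n) ℚ)

/-- `s n i` is the image in `E n` of the variable `X i`; these are the roots of the
general monic polynomial of degree `n`. -/
noncomputable def s (n : ℕ) (i : Fin n) : E n :=
  algebraMap (MvPolynomial (Fin n) ℚ) (E n) (X i)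

/-- `F n` is the subfield of `E n` generated by the images of the elementary symmetric
polynomials `e₁, …, eₙ`, i.e. by the coefficients of the general monic polynomial
`∏ i, (Y - s i)` of degree `n`. -/
noncomputable def F (n : ℕ) : Subfield (E n) :=
  Subfield.closure
    (Set.range fun k : Fin n =>
      algebraMap (MvPolynomial (Fin n) ℚ) (E n) (esymm (Fin n) ℚ ((k : ℕ) + 1)))


/-- For a subfield `K` of a field `L`, `Rad K` is the subfield of `L` generated by `K`
together with all elements `y` such that `y ^ m ∈ K` for some integer `m ≥ 1`. -/
def Rad {L : Type*} [Field L] (K : Subfield L) : Subfield L :=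
  Subfield.closure ((K : Set L) ∪ {y : L | ∃ m : ℕ, 1 ≤ m ∧ y ^ m ∈ K})

namespace NBRT

noncomputable def φ (n : ℕ) : MvPolynomial (Fin n) ℚ →+* E n :=
  algebraMap _ _

lemma φ_inj (n : ℕ) : Function.Injective (φ n) :=
  IsFractionRing.injective _ _

lemma s_inj (n : ℕ) : Function.Injective (s n) := fun i j h =>
  MvPolynomial.X_injective (φ_inj n h)

/-- A subfield of `E n` containing all the variables is everything. -/
lemma top_of_s_mem {n : ℕ} (K : Subfield (E n)) (hK : ∀ i, s n i ∈ K) :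
    ∀ y : E n, y ∈ K := by
  have hφ : ∀ a : MvPolynomial (Fin n) ℚ, φ n a ∈ K := by
    intro a
    induction a using MvPolynomial.induction_on with
    | C r =>
      have : φ n (C r) = ((r : ℚ) : E n) := eq_ratCast ((φ n).comp (C : ℚ →+* _)) r
      rw [this]
      exact SubfieldClass.ratCast_mem K r
    | add p q hp hq => rw [map_add]; exact add_mem hp hq
    | mul_X p i hp => rw [map_mul]; exact mul_mem hp (hK i)
  intro y
  obtain ⟨a, b, hb, hdiv⟩ := IsFractionRing.div_surjective (A := MvPolynomial (Fin n) ℚ) y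
  rw [← hdiv]
  exact div_mem (hφ a) (hφ b)

/-- The field automorphism of `E n` induced by a permutation of the variables. -/
noncomputable def fE {n : ℕ} (σ : Equiv.Perm (Fin n)) : E n ≃+* E n :=
  IsFractionRing.ringEquivOfRingEquiv (MvPolynomial.renameEquiv ℚ σ).toRingEquiv

lemma fE_algebraMap {n : ℕ} (σ : Equiv.Perm (Fin n)) (a : MvPolynomial (Fin n) ℚ) :
    fE σ (φ n a) = φ n (rename σ a) :=
  IsFractionRing.ringEquivOfRingEquiv_algebraMap _ a

lemma fE_s {n : ℕ} (σ : Equiv.Perm (Fin n)) (i : Fin n) :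
    fE σ (s n i) = s n (σ i) := by
  have := fE_algebraMap σ (X i)
  rwa [rename_X] at this

lemma fE_fixed {n : ℕ} (σ : Equiv.Perm (Fin n)) : ∀ y ∈ F n, fE σ y = y := by
  intro y hy
  refine Subfield.closure_induction ?_ ?_ ?_ ?_ ?_ ?_ hy
  · rintro x ⟨k, rfl⟩
    have := fE_algebraMap σ (esymm (Fin n) ℚ ((k : ℕ) + 1))
    rwa [rename_esymm] at this
  · exact map_one _
  · intro a b _ _ ha hb; rw [map_add, ha, hb]
  · intro a _ ha; rw [map_neg, ha]
  · intro a _ ha; rw [map_inv₀, ha]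
  · intro a b _ _ ha hb; rw [map_mul, ha, hb]

/-- The automorphism of `E n` over `F n` induced by a permutation. -/
noncomputable def gE {n : ℕ} (σ : Equiv.Perm (Fin n)) : E n ≃ₐ[F n] E n :=
  AlgEquiv.ofRingEquiv (f := fE σ) fun x => fE_fixed σ x x.2

lemma gE_apply {n : ℕ} (σ : Equiv.Perm (Fin n)) (y : E n) : gE σ y = fE σ y := rfl

/-- The embedding of the symmetric group into the Galois group. -/
noncomputable def Ψ (n : ℕ) : Equiv.Perm (Fin n) →* (E n ≃ₐ[F n] E n) :=
  MonoidHom.mk' (fun σ => gE σ) (by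
    intro σ τ
    apply AlgEquiv.ext
    intro y
    show fE (σ * τ) y = fE σ (fE τ y)
    have h : ((fE (n := n) σ).toRingHom.comp (fE τ).toRingHom) = (fE (σ * τ)).toRingHom := by
      apply IsLocalization.ringHom_ext (nonZeroDivisors (MvPolynomial (Fin n) ℚ))
      refine RingHom.ext fun a => ?_
      show fE σ (fE τ (φ n a)) = fE (σ * τ) (φ n a)
      rw [fE_algebraMap, fE_algebraMap, fE_algebraMap, rename_rename]
      rfl
    exact (DFunLike.congr_fun h y).symm)

lemma Ψ_inj (n : ℕ) : Function.Injective (Ψ n) := by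
  rw [injective_iff_map_eq_one]
  intro σ hσ
  apply Equiv.ext
  intro i
  have : (Ψ n σ) (s n i) = s n i := by rw [hσ]; rfl
  have h2 : fE σ (s n i) = s n i := this
  rw [fE_s] at h2
  simpa using s_inj n h2

noncomputable def Φ (n : ℕ) : Polynomial (E n) :=
  ∏ i : Fin n, (Polynomial.X + Polynomial.C (s n i))

lemma Φ_monic (n : ℕ) : (Φ n).Monic :=
  Polynomial.monic_prod_of_monic _ _ fun i _ => Polynomial.monic_X_add_C _

lemma Φ_natDegree (n : ℕ) : (Φ n).natDegree = n := by
  rw [Φ, Polynomial.natDegree_prod]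
  · simp
  · intro i _
    exact (Polynomial.monic_X_add_C _).ne_zero

lemma Φ_map (n : ℕ) :
    Φ n = Polynomial.map (φ n) (∏ i : Fin n, (Polynomial.X + Polynomial.C (X i))) := by
  rw [Polynomial.map_prod]
  simp [Φ, s, φ]

lemma Φ_coeff_mem (n : ℕ) (k : ℕ) : (Φ n).coeff k ∈ F n := by
  by_cases h : k ≤ n
  · rw [Φ_map, Polynomial.coeff_map,
      MvPolynomial.prod_X_add_C_coeff (σ := Fin n) (R := ℚ) k (by simpa using h)]
    rcases Nat.eq_or_lt_of_le h with rfl | hlt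
    · simp only [Fintype.card_fin, Nat.sub_self, esymm_zero, map_one]
      exact one_mem _
    · apply Subfield.subset_closure
      refine ⟨⟨n - k - 1, by omega⟩, ?_⟩
      simp only [Fintype.card_fin, φ]
      congr 2
      omega
  · rw [Polynomial.coeff_eq_zero_of_natDegree_lt (by rw [Φ_natDegree]; omega)]
    exact zero_mem _

lemma exists_q (n : ℕ) :
    ∃ q : Polynomial (F n), q.map (algebraMap (F n) (E n)) = Φ n ∧ q.Monic := by
  have hl : Φ n ∈ Polynomial.lifts (algebraMap (F n) (E n)) := by
    rw [Polynomial.lifts_iff_coeff_lifts]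
    intro k
    exact Set.mem_range.2 ⟨⟨(Φ n).coeff k, Φ_coeff_mem n k⟩, rfl⟩
  obtain ⟨q, hq, -, hm⟩ := Polynomial.lifts_and_degree_eq_and_monic hl (Φ_monic n)
  exact ⟨q, hq, hm⟩

end NBRT

/-- For `n ≥ 5` and any `N : ℕ`, the root `s 0` of the general monic polynomial of degree `n`
does not lie in the `N`-fold iterate `Rad^[N] F`: no fixed number of nested levels of radicals
over the field of coefficients suffices to express a root. -/
theorem no_bounded_radical_tower (n : ℕ) (hn : 5 ≤ n) (N : ℕ) :
    s n ⟨0, by omega⟩ ∉ Rad^[N] (F n) := by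
  intro hmem
  have h0 : (0:ℕ) < n := by omega
  haveI : Module.IsTorsionFree (↥(F n)) (E n) :=
    Module.isTorsionFree_iff_algebraMap_injective.2 (algebraMap (↥(F n)) (E n)).injective
  -- Step 1 : membership in an iterated radical extension implies solvability by radicals.
  have hsbr : ∀ M : ℕ, ∀ y ∈ Rad^[M] (F n), IsSolvableByRad (F n) y := by
    intro M
    induction M with
    | zero =>
      intro y hy
      exact IsSolvableByRad.base (E := E n) (⟨y, hy⟩ : F n)
    | succ M ih =>
      intro y hy
      rw [Function.iterate_succ_apply'] at hy
      refine Subfield.closure_induction ?_ ?_ ?_ ?_ ?_ ?_ hy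
      · rintro x (hx | ⟨m, hm1, hmx⟩)
        · exact ih x hx
        · exact IsSolvableByRad.rad x m (by omega) (ih _ hmx)
      · have := IsSolvableByRad.base (E := E n) (1 : F n)
        rwa [map_one] at this
      · exact fun a b _ _ ha hb => IsSolvableByRad.add a b ha hb
      · exact fun a _ ha => IsSolvableByRad.neg a ha
      · exact fun a _ ha => IsSolvableByRad.inv a ha
      · exact fun a b _ _ ha hb => IsSolvableByRad.mul a b ha hb
  have hx : IsSolvableByRad (F n) (-(s n ⟨0, h0⟩)) :=
    hsbr N _ (neg_mem hmem)
  -- Step 2 : the element `-(s n 0)` is integral over `F n`.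
  obtain ⟨q, hq, hqm⟩ := NBRT.exists_q n
  have haq : Polynomial.aeval (-(s n ⟨0, h0⟩)) q = 0 := by
    rw [Polynomial.aeval_def, Polynomial.eval₂_eq_eval_map, hq, NBRT.Φ, Polynomial.eval_prod]
    exact Finset.prod_eq_zero (Finset.mem_univ ⟨0, h0⟩) (by simp)
  have hint : IsIntegral (F n) (-(s n ⟨0, h0⟩)) := ⟨q, hqm, haq⟩
  set p := minpoly (F n) (-(s n ⟨0, h0⟩)) with hp
  have hirr : Irreducible p := minpoly.irreducible hint
  have hne : p ≠ 0 := minpoly.ne_zero hint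
  have hdvd : p ∣ q := minpoly.dvd _ _ haq
  -- Step 3 : all `-(s n i)` are roots of `p`.
  have hroots : ∀ i : Fin n, Polynomial.aeval (-(s n i)) p = 0 := by
    intro i
    have hgx : (NBRT.Ψ n (Equiv.swap ⟨0, h0⟩ i)) (-(s n ⟨0, h0⟩)) = -(s n i) := by
      rw [map_neg]
      show -(NBRT.fE (Equiv.swap ⟨0, h0⟩ i) (s n ⟨0, h0⟩)) = _
      rw [NBRT.fE_s, Equiv.swap_apply_left]
    calc Polynomial.aeval (-(s n i)) p
        = Polynomial.aeval ((NBRT.Ψ n (Equiv.swap ⟨0, h0⟩ i)) (-(s n ⟨0, h0⟩))) p := by rw [hgx]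
      _ = (NBRT.Ψ n (Equiv.swap ⟨0, h0⟩ i)) (Polynomial.aeval (-(s n ⟨0, h0⟩)) p) :=
          Polynomial.aeval_algHom_apply _ _ _
      _ = 0 := by rw [minpoly.aeval, map_zero]
  -- Step 4 : `E n` is a splitting field of `p` over `F n`.
  have hΦsplits : (NBRT.Φ n).Splits :=
    Polynomial.Splits.prod fun i _ =>
      Polynomial.Splits.of_degree_le_one (by rw [Polynomial.degree_X_add_C])
  have hsp : (p.map (algebraMap (F n) (E n))).Splits := by
    exact Polynomial.Splits.of_dvd hΦsplits ((NBRT.Φ_monic n).ne_zero)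
      (hq ▸ Polynomial.map_dvd _ hdvd)
  have hadj : IntermediateField.adjoin (F n) (p.rootSet (E n)) = ⊤ := by
    rw [eq_top_iff]
    intro y _
    refine NBRT.top_of_s_mem (IntermediateField.adjoin (F n) (p.rootSet (E n))).toSubfield
      (fun i => ?_) y
    have : -(s n i) ∈ p.rootSet (E n) := by
      rw [Polynomial.mem_rootSet]
      exact ⟨hne, hroots i⟩
    have h2 : -(s n i) ∈ IntermediateField.adjoin (F n) (p.rootSet (E n)) :=
      IntermediateField.subset_adjoin _ _ this
    exact (by simpa using neg_mem h2 : s n i ∈ IntermediateField.adjoin (F n) (p.rootSet (E n)))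
  haveI hsf : Polynomial.IsSplittingField (F n) (E n) p := by
    refine ⟨hsp, ?_⟩
    rw [← IntermediateField.adjoin_toSubalgebra_of_isAlgebraic
      (fun x hx => ⟨p, hne, ((Polynomial.mem_rootSet).1 hx).2⟩), hadj,
      IntermediateField.top_toSubalgebra]
  -- Step 5 : Abel-Ruffini.
  have hGal : IsSolvable p.Gal := solvableByRad.isSolvable' (by
    have key : ∀ y, IsSolvableByRad (F n) y → y ∈ solvableByRad (F n) (E n) := by
      intro y hy
      induction hy with
      | base a => exact algebraMap_mem _ a
      | add _ _ _ _ ha hb => exact add_mem ha hb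
      | neg _ _ ha => exact neg_mem ha
      | mul _ _ _ _ ha hb => exact mul_mem ha hb
      | inv _ _ ha => exact inv_mem ha
      | rad _ _ hn _ ha => exact solvableByRad.rad_mem hn ha
    exact key _ hx) hirr (minpoly.aeval _ _)
  haveI : Group.IsSolvable (p.SplittingField ≃ₐ[↥(F n)] p.SplittingField) := hGal
  let e : E n ≃ₐ[F n] p.SplittingField := Polynomial.IsSplittingField.algEquiv (E n) p
  have hinj : Function.Injective ((AlgEquiv.autCongr e).toMonoidHom.comp (NBRT.Ψ n)) :=
    (AlgEquiv.autCongr e).injective.comp (NBRT.Ψ_inj n)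
  have hsolv : IsSolvable (Equiv.Perm (Fin n)) := solvable_of_solvable_injective hinj
  exact Equiv.Perm.not_solvable (Fin n)
    (by rw [Cardinal.mk_fintype, Fintype.card_fin]; exact_mod_cast hn) hsolv
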